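/- For g(x) = 1−x² and any f ∈ C⁶ on a neighborhood of [−1,1], lim_{x→1} [f, 1−x²]_K(x) = 2Λ[f](1) − 48(A+2)f(1) and lim_{x→−1} [f, 1−x²]_K(x) = −2Λ[f](−1) + 48(B+2)f(−1), where Λ[f](x) = −((1−x²)³f‴(x))′ + (1−x²)(12+α(1−x²))f″(x). -/

import Mathlib

open Set Filter Topology intervalIntegral

noncomputable def krallAlpha (A B : ℝ) : ℝ := 3*A + 3*B + 6

noncomputable def krallPi (A B : ℝ) (x : ℝ) : ℝ :=
  (-6*A - 6*B - 12*A*B)*x^2 + (12*A - 12*B)*x + (12*A*B + 18*A + 18*B + 24)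

/-- The sixth-order Krall differential expression, expanded form. -/
noncomputable def lK (A B : ℝ) (y : ℝ → ℝ) (x : ℝ) : ℝ :=
  (x^2 - 1)^3 * iteratedDeriv 6 y x
  + 18*x*(x^2 - 1)^2 * iteratedDeriv 5 y x
  + (x^2 - 1)*((3*A + 3*B + 96)*x^2 - 3*A - 3*B - 36) * iteratedDeriv 4 y x
  + (24*A + 24*B + 168)*x*(x^2 - 1) * iteratedDeriv 3 y x
  + ((12*A*B + 42*A + 42*B + 72)*x^2 + (12*B - 12*A)*x - 12*A*B - 30*A - 30*B - 72)
      * iteratedDeriv 2 y x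
  + ((24*A*B + 12*A + 12*B)*x + 12*B - 12*A) * deriv y x

/-- The sixth-order Krall differential expression, Lagrangian symmetric form. -/
noncomputable def lKsym (A B : ℝ) (y : ℝ → ℝ) (x : ℝ) : ℝ :=
  - iteratedDeriv 3 (fun t => (1 - t^2)^3 * iteratedDeriv 3 y t) x
  + iteratedDeriv 2 (fun t => (1 - t^2)*(12 + krallAlpha A B * (1 - t^2)) * iteratedDeriv 2 y t) x
  - deriv (fun t => krallPi A B t * deriv y t) x

/-- Λ[f](x) = −((1−x²)³f‴(x))′ + (1−x²)(12+α(1−x²))f″(x). -/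
noncomputable def LamK (A B : ℝ) (f : ℝ → ℝ) (x : ℝ) : ℝ :=
  - deriv (fun t => (1 - t^2)^3 * iteratedDeriv 3 f t) x
  + (1 - x^2)*(12 + krallAlpha A B * (1 - x^2)) * iteratedDeriv 2 f x

/-- [f,1]_K(x) = −((1−x²)³f‴)″ + ((1−x²)(12+α(1−x²))f″)′ − π(x)f′(x). -/
noncomputable def concOne (A B : ℝ) (f : ℝ → ℝ) (x : ℝ) : ℝ :=
  - iteratedDeriv 2 (fun t => (1 - t^2)^3 * iteratedDeriv 3 f t) x
  + deriv (fun t => (1 - t^2)*(12 + krallAlpha A B * (1 - t^2)) * iteratedDeriv 2 f t) x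
  - krallPi A B x * deriv f x

/-- The bilinear concomitant [f,g]_K of the Krall expression (real-valued case). -/
noncomputable def conc (A B : ℝ) (f g : ℝ → ℝ) (x : ℝ) : ℝ :=
  concOne A B f x * g x - concOne A B g x * f x
  - LamK A B f x * deriv g x + LamK A B g x * deriv f x
  - (1 - x^2)^3 * (iteratedDeriv 3 f x * iteratedDeriv 2 g x
      - iteratedDeriv 2 f x * iteratedDeriv 3 g x)

lemma iteratedDerivWithin_of_isOpen' {U : Set ℝ} {f : ℝ → ℝ} (hU : IsOpen U) {x : ℝ}
    (hx : x ∈ U) (n : ℕ) : iteratedDerivWithin n f U x = iteratedDeriv n f x := by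
  rw [iteratedDerivWithin, iteratedDeriv, iteratedFDerivWithin_of_isOpen n hU hx]

lemma continuousOn_iteratedDeriv' {U : Set ℝ} {f : ℝ → ℝ} (hU : IsOpen U) {m n : ℕ}
    (hmn : m ≤ n) (hf : ContDiffOn ℝ n f U) : ContinuousOn (iteratedDeriv m f) U :=
  (hf.continuousOn_iteratedDerivWithin (by exact_mod_cast hmn) hU.uniqueDiffOn).congr
    fun x hx => (iteratedDerivWithin_of_isOpen' hU hx m).symm

lemma contDiffOn_iteratedDeriv' {U : Set ℝ} (hU : IsOpen U) {k n : ℕ} {f : ℝ → ℝ}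
    (hf : ContDiffOn ℝ (n + k : ℕ) f U) : ContDiffOn ℝ (n : ℕ) (iteratedDeriv k f) U := by
  induction k generalizing f with
  | zero => simpa [iteratedDeriv_zero] using hf
  | succ k ih =>
    rw [iteratedDeriv_succ']
    exact ih (hf.deriv_of_isOpen hU (by push_cast; exact le_of_eq (add_assoc _ _ _)))

lemma g_hasDerivAt (x : ℝ) : HasDerivAt (fun t : ℝ => 1 - t^2) (-2*x) x := by
  have := (hasDerivAt_pow 2 x).const_sub 1
  convert this using 1
  · rfl
  · rfl
  push_cast; ring

lemma deriv_g : deriv (fun t : ℝ => 1 - t^2) = fun x => -2*x :=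
  funext fun x => (g_hasDerivAt x).deriv

lemma iteratedDeriv2_g : iteratedDeriv 2 (fun t : ℝ => 1 - t^2) = fun _ => (-2 : ℝ) := by
  funext x
  rw [show (2:ℕ) = 1 + 1 from rfl, iteratedDeriv_succ, iteratedDeriv_one, deriv_g]
  simpa using ((hasDerivAt_id x).const_mul (-2 : ℝ)).deriv

lemma iteratedDeriv3_g : iteratedDeriv 3 (fun t : ℝ => 1 - t^2) = fun _ => (0 : ℝ) := by
  funext x
  rw [show (3:ℕ) = 2 + 1 from rfl, iteratedDeriv_succ, iteratedDeriv2_g]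
  simp

lemma concOne_g_eq (A B : ℝ) (x : ℝ) :
    concOne A B (fun t => 1 - t^2) x
      = ((-2*x)*(12 + krallAlpha A B*(1-x^2)) + (1-x^2)*(krallAlpha A B*(-2*x)))*(-2)
        + krallPi A B x * (2*x) := by
  have h1 : iteratedDeriv 2 (fun t : ℝ => (1 - t^2)^3 * iteratedDeriv 3 (fun t : ℝ => 1 - t^2) t) x = 0 := by
    simp only [iteratedDeriv3_g, mul_zero]
    rw [show (2:ℕ) = 1 + 1 from rfl, iteratedDeriv_succ, iteratedDeriv_one]
    simp
  have h2 : HasDerivAt (fun t : ℝ => (1 - t^2)*(12 + krallAlpha A B*(1 - t^2)) * iteratedDeriv 2 (fun t : ℝ => 1 - t^2) t)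
      (((-2*x)*(12 + krallAlpha A B*(1-x^2)) + (1-x^2)*(krallAlpha A B*(-2*x)))*(-2)) x := by
    simp only [iteratedDeriv2_g]
    exact ((g_hasDerivAt x).mul (((g_hasDerivAt x).const_mul (krallAlpha A B)).const_add 12)).mul_const (-2)
  simp only [concOne, h1, h2.deriv, deriv_g]
  ring

lemma LamK_g_eq (A B : ℝ) (x : ℝ) :
    LamK A B (fun t => 1 - t^2) x = (1-x^2)*(12 + krallAlpha A B*(1-x^2))*(-2) := by
  have h1 : deriv (fun t : ℝ => (1 - t^2)^3 * iteratedDeriv 3 (fun t : ℝ => 1 - t^2) t) x = 0 := by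
    simp only [iteratedDeriv3_g, mul_zero]
    simp
  simp only [LamK, h1, iteratedDeriv2_g]
  ring

/-- lim_{x→1}[f,1−x²]_K = 2Λ[f](1) − 48(A+2)f(1) and
lim_{x→−1}[f,1−x²]_K = −2Λ[f](−1) + 48(B+2)f(−1). -/
theorem krall_concomitant_with_one_minus_sq (A B : ℝ) (hA : 0 < A) (hB : 0 < B)
    (f : ℝ → ℝ) (U : Set ℝ) (hU : IsOpen U) (hUI : Set.Icc (-1 : ℝ) 1 ⊆ U)
    (hf : ContDiffOn ℝ 6 f U) :
    Filter.Tendsto (fun x => conc A B f (fun t => 1 - t^2) x)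
      (nhdsWithin 1 (Set.Ioo (-1 : ℝ) 1))
      (nhds (2 * LamK A B f 1 - 48*(A + 2) * f 1)) ∧
    Filter.Tendsto (fun x => conc A B f (fun t => 1 - t^2) x)
      (nhdsWithin (-1) (Set.Ioo (-1 : ℝ) 1))
      (nhds (-2 * LamK A B f (-1) + 48*(B + 2) * f (-1))) := by
  have hf' : ContDiffOn ℝ ((6:ℕ) : ℕ∞) f U := by exact_mod_cast hf
  have hd3 : ContDiffOn ℝ ((3:ℕ)) (iteratedDeriv 3 f) U :=
    contDiffOn_iteratedDeriv' hU (n := 3) (k := 3) (by exact_mod_cast hf')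
  have hd2 : ContDiffOn ℝ ((4:ℕ)) (iteratedDeriv 2 f) U :=
    contDiffOn_iteratedDeriv' hU (n := 4) (k := 2) (by exact_mod_cast hf')
  have hpoly1 : ContDiff ℝ ((3:ℕ)) (fun t : ℝ => (1 - t^2)^3) :=
    (contDiff_const.sub (contDiff_id.pow 2)).pow 3
  have hpoly2 : ContDiff ℝ ((4:ℕ)) (fun t : ℝ => (1 - t^2)*(12 + krallAlpha A B*(1 - t^2))) :=
    (contDiff_const.sub (contDiff_id.pow 2)).mul
      (contDiff_const.add (contDiff_const.mul (contDiff_const.sub (contDiff_id.pow 2))))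
  have hH : ContDiffOn ℝ ((3:ℕ)) (fun t => (1 - t^2)^3 * iteratedDeriv 3 f t) U :=
    hpoly1.contDiffOn.mul hd3
  have hQ : ContDiffOn ℝ ((4:ℕ))
      (fun t => (1 - t^2)*(12 + krallAlpha A B*(1 - t^2)) * iteratedDeriv 2 f t) U :=
    hpoly2.contDiffOn.mul hd2
  have hc1 : ContinuousOn (iteratedDeriv 2 (fun t => (1 - t^2)^3 * iteratedDeriv 3 f t)) U :=
    continuousOn_iteratedDeriv' hU (by norm_num) hH
  have hc2 : ContinuousOn
      (deriv (fun t => (1 - t^2)*(12 + krallAlpha A B*(1 - t^2)) * iteratedDeriv 2 f t)) U := by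
    rw [← iteratedDeriv_one]; exact continuousOn_iteratedDeriv' hU (by norm_num) hQ
  have hderivH : ContinuousOn (deriv (fun t => (1 - t^2)^3 * iteratedDeriv 3 f t)) U := by
    rw [← iteratedDeriv_one]; exact continuousOn_iteratedDeriv' hU (by norm_num) hH
  have hderivf : ContinuousOn (deriv f) U := by
    rw [← iteratedDeriv_one]; exact continuousOn_iteratedDeriv' hU (by norm_num) hf'
  have hc3 : ContinuousOn (iteratedDeriv 3 f) U := continuousOn_iteratedDeriv' hU (by norm_num) hf'
  have hc2f : ContinuousOn (iteratedDeriv 2 f) U := continuousOn_iteratedDeriv' hU (by norm_num) hf'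
  have hcf : ContinuousOn f U := hf'.continuousOn
  have hconcOne : ContinuousOn (fun x => concOne A B f x) U := by
    simp only [concOne, krallPi]
    fun_prop
  have hLamK : ContinuousOn (fun x => LamK A B f x) U := by
    simp only [LamK, krallAlpha]
    fun_prop
  have hconc : ContinuousOn (fun x => conc A B f (fun t => 1 - t^2) x) U := by
    simp only [conc, concOne_g_eq, LamK_g_eq, deriv_g, iteratedDeriv2_g, iteratedDeriv3_g,
      krallPi, krallAlpha]
    fun_prop
  constructor
  · have h1U : (1:ℝ) ∈ U := hUI (by norm_num)
    have ht := (hconc.continuousAt (hU.mem_nhds h1U)).tendsto.mono_left (nhdsWithin_le_nhds (s := Set.Ioo (-1:ℝ) 1))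
    have hval : conc A B f (fun t => 1 - t^2) 1 = 2 * LamK A B f 1 - 48*(A + 2) * f 1 := by
      simp only [conc, concOne_g_eq, LamK_g_eq, deriv_g, iteratedDeriv2_g, iteratedDeriv3_g,
        krallPi, krallAlpha]
      ring
    exact hval ▸ ht
  · have h1U : (-1:ℝ) ∈ U := hUI (by norm_num)
    have ht := (hconc.continuousAt (hU.mem_nhds h1U)).tendsto.mono_left (nhdsWithin_le_nhds (s := Set.Ioo (-1:ℝ) 1))
    have hval : conc A B f (fun t => 1 - t^2) (-1) = -2 * LamK A B f (-1) + 48*(B + 2) * f (-1) := by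
      simp only [conc, concOne_g_eq, LamK_g_eq, deriv_g, iteratedDeriv2_g, iteratedDeriv3_g,
        krallPi, krallAlpha]
      ring
    exact hval ▸ ht
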